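/- arXiv:2304.07561 — 8 statements merged into one kernel-verified Lean document; each statement's English description precedes it below -/
import Mathlib

section
/- Let G ∈ F_q^{2N×N} be a strongly self-orthogonal matrix (Gᵀ J G = 0 and rank(G) = N), let H ∈ F_q^{2N×N} be such that [G | H] is invertible, and let M = [0 | I_N]·[G | H]⁻¹ be the bottom N rows of the inverse. Then M J Mᵀ = 0 and rank(M) = N, i.e., Mᵀ is strongly self-orthogonal. -/
open Matrix

/-- The standard symplectic structure matrix `J = [[0, -I], [I, 0]]`. -/
def Jmat (F : Type*) [Field F] (N : ℕ) : Matrix (Fin N ⊕ Fin N) (Fin N ⊕ Fin N) F :=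
  Matrix.fromBlocks 0 (-1) 1 0

/-- If `G` is strongly self-orthogonal and `[G | H]` is invertible, then
`M = [0 | I]·[G | H]⁻¹` has `M J Mᵀ = 0` and `rank M = N`. -/
theorem GH_construction_sso {F : Type*} [Field F] {N : ℕ}
    (G H : Matrix (Fin N ⊕ Fin N) (Fin N) F)
    (hG : Gᵀ * Jmat F N * G = 0) (hGrank : G.rank = N)
    (hGH : IsUnit (Matrix.fromCols G H)) :
    (Matrix.fromCols (0 : Matrix (Fin N) (Fin N) F) (1 : Matrix (Fin N) (Fin N) F) * (Matrix.fromCols G H)⁻¹) *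
        Jmat F N *
        (Matrix.fromCols (0 : Matrix (Fin N) (Fin N) F) (1 : Matrix (Fin N) (Fin N) F) * (Matrix.fromCols G H)⁻¹)ᵀ = 0 ∧
      (Matrix.fromCols (0 : Matrix (Fin N) (Fin N) F) (1 : Matrix (Fin N) (Fin N) F) *
        (Matrix.fromCols G H)⁻¹).rank = N := by
  set A := Matrix.fromCols G H with hA
  set M := Matrix.fromCols (0 : Matrix (Fin N) (Fin N) F) (1 : Matrix (Fin N) (Fin N) F) * A⁻¹
    with hM
  have hAdet : IsUnit A.det := (Matrix.isUnit_iff_isUnit_det A).mp hGH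
  have hAinv : A⁻¹ * A = 1 := Matrix.nonsing_inv_mul A hAdet
  -- J is a unit with J⁻¹ = -J
  have hJmul : Jmat F N * (-(Jmat F N)) = 1 := by
    simp [Jmat, Matrix.fromBlocks_neg, Matrix.fromBlocks_multiply, ← Matrix.fromBlocks_one]
  have hJunit : IsUnit (Jmat F N) := @isUnit_of_invertible _ _ _ (invertibleOfRightInverse _ _ hJmul)
  have hJinv : (Jmat F N)⁻¹ = -(Jmat F N) := Matrix.inv_eq_right_inv hJmul
  set S := Aᵀ * Jmat F N * A with hS
  have hATunit : IsUnit Aᵀ := by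
    rw [Matrix.isUnit_iff_isUnit_det, Matrix.det_transpose]; exact hAdet
  have hSunit : IsUnit S := (hATunit.mul hJunit).mul hGH
  have hSdet : IsUnit S.det := (Matrix.isUnit_iff_isUnit_det S).mp hSunit
  have hSblocks : S = Matrix.fromBlocks 0 (Gᵀ * Jmat F N * H) (Hᵀ * Jmat F N * G)
      (Hᵀ * Jmat F N * H) := by
    rw [hS, hA, Matrix.transpose_fromCols, Matrix.fromRows_mul,
      Matrix.fromRows_mul_fromCols, hG]
  have hSinv : S⁻¹ = -(A⁻¹ * Jmat F N * (A⁻¹)ᵀ) := by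
    rw [hS, Matrix.mul_inv_rev, Matrix.mul_inv_rev, hJinv, Matrix.transpose_nonsing_inv]
    simp [Matrix.mul_assoc]
  -- block entries of S⁻¹
  set b := (S⁻¹).toBlocks₁₂ with hb
  set d := (S⁻¹).toBlocks₂₂ with hd
  have hX : S⁻¹ = Matrix.fromBlocks (S⁻¹).toBlocks₁₁ b (S⁻¹).toBlocks₂₁ d :=
    (Matrix.fromBlocks_toBlocks _).symm
  have hXS : S⁻¹ * S = 1 := Matrix.nonsing_inv_mul S hSdet
  rw [hX, hSblocks, Matrix.fromBlocks_multiply, ← Matrix.fromBlocks_one] at hXS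
  have h11 : b * (Hᵀ * Jmat F N * G) = 1 := by
    have h := congrArg Matrix.toBlocks₁₁ hXS
    simp only [Matrix.toBlocks_fromBlocks₁₁, Matrix.mul_zero, zero_add] at h
    exact h
  have h21 : d * (Hᵀ * Jmat F N * G) = 0 := by
    have h := congrArg Matrix.toBlocks₂₁ hXS
    simp only [Matrix.toBlocks_fromBlocks₂₁, Matrix.mul_zero, zero_add] at h
    exact h
  have hQb : (Hᵀ * Jmat F N * G) * b = 1 := mul_eq_one_comm.mp h11
  have hd0 : d = 0 := by
    have h := congrArg (· * b) h21
    simp only [Matrix.zero_mul] at h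
    rwa [Matrix.mul_assoc, hQb, Matrix.mul_one] at h
  constructor
  · have : M * Jmat F N * Mᵀ =
        Matrix.fromCols (0 : Matrix (Fin N) (Fin N) F) (1 : Matrix (Fin N) (Fin N) F) * (-(S⁻¹)) *
          (Matrix.fromCols (0 : Matrix (Fin N) (Fin N) F) (1 : Matrix (Fin N) (Fin N) F))ᵀ := by
      rw [hSinv, neg_neg, hM, Matrix.transpose_mul]
      simp [Matrix.mul_assoc]
    rw [this, hX, hd0, Matrix.transpose_fromCols]
    simp [Matrix.fromBlocks_neg, Matrix.fromCols_mul_fromBlocks,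
      Matrix.fromCols_mul_fromRows]
  · have hMA : M * A = Matrix.fromCols 0 1 := by
      rw [hM, Matrix.mul_assoc, hAinv, Matrix.mul_one]
    rw [hA, Matrix.mul_fromCols] at hMA
    have hMH : M * H = 1 := (Matrix.fromCols_inj.eq_iff.mp hMA).2
    have h1 : (M * H).rank = N := by rw [hMH, Matrix.rank_one]; simp
    have h2 : (M * H).rank ≤ M.rank := Matrix.rank_mul_le_left M H
    have h3 : M.rank ≤ N := by
      simpa using Matrix.rank_le_card_height M
    omega
end

section
/- Let M ∈ F_q^{N×2N} with Mᵀ strongly self-orthogonal (M J Mᵀ = 0, rank(M) = N). Then there exist matrices G, H ∈ F_q^{2N×N} such that G is strongly self-orthogonal (Gᵀ J G = 0, rank(G) = N), the 2N×2N matrix [G | H] is invertible, and M = [0 | I_N]·[G | H]⁻¹. In other words, every SSO transfer matrix arises from a (G,H)-construction. -/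
open Matrix

lemma Jmat_mul_Jmat (F : Type*) [Field F] (N : ℕ) : Jmat F N * Jmat F N = -1 := by
  have h1 : (-1 : Matrix (Fin N ⊕ Fin N) (Fin N ⊕ Fin N) F) =
      Matrix.fromBlocks (-1) 0 0 (-1) := by
    rw [← Matrix.fromBlocks_one, Matrix.fromBlocks_neg, neg_zero]
  rw [Jmat, Matrix.fromBlocks_multiply, h1]
  simp

lemma Jmat_transpose (F : Type*) [Field F] (N : ℕ) : (Jmat F N)ᵀ = -(Jmat F N) := by
  rw [Jmat, Matrix.fromBlocks_transpose]
  simp [Matrix.fromBlocks_neg]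

/-- Every SSO transfer matrix `M` arises from a `(G,H)`-construction: there exist
`G` strongly self-orthogonal and `H` with `[G | H]` invertible such that
`M = [0 | I]·[G | H]⁻¹`. -/
theorem sso_from_GH_construction {F : Type*} [Field F] {N : ℕ}
    (M : Matrix (Fin N) (Fin N ⊕ Fin N) F)
    (hM : M * Jmat F N * Mᵀ = 0) (hrank : M.rank = N) :
    ∃ G H : Matrix (Fin N ⊕ Fin N) (Fin N) F,
      Gᵀ * Jmat F N * G = 0 ∧ G.rank = N ∧ IsUnit (Matrix.fromCols G H) ∧
      M = Matrix.fromCols (0 : Matrix (Fin N) (Fin N) F) 1 *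
        (Matrix.fromCols G H)⁻¹ := by
  classical
  set J := Jmat F N with hJ
  have hJJ : J * J = -1 := Jmat_mul_Jmat F N
  have hJT : Jᵀ = -J := Jmat_transpose F N
  have hJdet : IsUnit J.det := Matrix.isUnit_det_of_right_inverse (B := -J) (by
    rw [Matrix.mul_neg, hJJ, neg_neg])
  -- carrier G
  set G : Matrix (Fin N ⊕ Fin N) (Fin N) F := J * Mᵀ with hG
  have hGJG : Gᵀ * J * G = 0 := by
    have : Gᵀ * J * G = M * (Jᵀ * (J * (J * Mᵀ))) := by
      simp [hG, Matrix.transpose_mul, Matrix.mul_assoc]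
    rw [this, ← Matrix.mul_assoc J J Mᵀ, hJJ, hJT]
    simp only [Matrix.neg_mul, Matrix.mul_neg, neg_neg, Matrix.one_mul, Matrix.neg_mul]
    calc M * (J * Mᵀ) = M * J * Mᵀ := by rw [Matrix.mul_assoc]
    _ = 0 := hM
  have hGrank : G.rank = N := by
    rw [hG, Matrix.rank_mul_eq_right_of_isUnit_det _ _ hJdet,
      Matrix.rank_transpose, hrank]
  -- M * G = 0
  have hMG : M * G = 0 := by
    rw [hG, ← Matrix.mul_assoc]; exact hM
  -- right inverse H
  have hrange : LinearMap.range M.mulVecLin = ⊤ := by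
    apply Submodule.eq_top_of_finrank_eq
    rw [← Matrix.rank, hrank, Module.finrank_fin_fun]
  obtain ⟨g, hg⟩ := M.mulVecLin.exists_rightInverse_of_surjective hrange
  set H : Matrix (Fin N ⊕ Fin N) (Fin N) F := LinearMap.toMatrix' g with hH
  have hMH : M * H = 1 := by
    have h1 : Matrix.toLin' (M * H) = Matrix.toLin' (1 : Matrix (Fin N) (Fin N) F) := by
      rw [Matrix.toLin'_mul, Matrix.toLin'_one, hH, Matrix.toLin'_toMatrix',
        Matrix.toLin'_apply', hg]
    exact Matrix.toLin'.injective h1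
  -- invertibility of [G | H]
  set A := Matrix.fromCols G H with hA
  have hGinj : ∀ x : Fin N → F, G *ᵥ x = 0 → x = 0 := by
    intro x hx
    have hinj : Function.Injective G.mulVecLin := by
      rw [← LinearMap.ker_eq_bot]
      have := LinearMap.finrank_range_add_finrank_ker G.mulVecLin
      rw [← Matrix.rank, hGrank, Module.finrank_fin_fun] at this
      have h0 : Module.finrank F (LinearMap.ker G.mulVecLin) = 0 := by omega
      exact Submodule.finrank_eq_zero.mp h0
    have : G.mulVecLin x = G.mulVecLin 0 := by
      simp [Matrix.mulVecLin_apply, hx]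
    exact hinj this
  have hAdet : A.det ≠ 0 := by
    intro hd
    obtain ⟨v, hv0, hv⟩ := (Matrix.exists_mulVec_eq_zero_iff).mpr hd
    have hv' : G *ᵥ (v ∘ Sum.inl) + H *ᵥ (v ∘ Sum.inr) = 0 := by
      have : A *ᵥ Sum.elim (v ∘ Sum.inl) (v ∘ Sum.inr) = 0 := by
        have hvelim : Sum.elim (v ∘ Sum.inl) (v ∘ Sum.inr) = v := by
          ext (i | i) <;> rfl
        rw [hvelim]; exact hv
      rwa [hA, Matrix.fromCols_mulVec_sumElim] at this
    -- apply M
    have h2 : v ∘ Sum.inr = 0 := by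
      have e1 : M *ᵥ (G *ᵥ (v ∘ Sum.inl) + H *ᵥ (v ∘ Sum.inr)) = 0 := by
        rw [hv', Matrix.mulVec_zero]
      rw [Matrix.mulVec_add, Matrix.mulVec_mulVec, Matrix.mulVec_mulVec, hMG, hMH] at e1
      simpa using e1
    have h1 : v ∘ Sum.inl = 0 := by
      apply hGinj
      rw [h2] at hv'
      simpa using hv'
    apply hv0
    ext (i | i)
    · exact congrFun h1 i
    · exact congrFun h2 i
  have hAunit : IsUnit A := (Matrix.isUnit_iff_isUnit_det A).mpr (isUnit_iff_ne_zero.mpr hAdet)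
  refine ⟨G, H, hGJG, hGrank, hAunit, ?_⟩
  have hMA : M * A = (Matrix.fromCols 0 1 : Matrix (Fin N) (Fin N ⊕ Fin N) F) := by
    rw [hA, Matrix.mul_fromCols, hMG, hMH]
  rw [← hMA]
  show M = M * A * A⁻¹
  rw [Matrix.mul_assoc, Matrix.mul_nonsing_inv _ (isUnit_iff_ne_zero.mpr hAdet),
    Matrix.mul_one]
end

section
/- Let G ∈ F_q^{2N×N} be strongly self-orthogonal, H ∈ F_q^{2N×N} with [G | H] invertible, and M = [0 | I_N]·[G | H]⁻¹. Then the row space of M equals the row space of Gᵀ J; equivalently, there exists an invertible P ∈ F_q^{N×N} with M = P Gᵀ J. -/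
open Matrix

lemma span_rows_mul_le {F : Type*} [Field F] {m n k : Type*} [Fintype n]
    (P : Matrix m n F) (B : Matrix n k F) :
    Submodule.span F (Set.range fun i => (P * B) i) ≤
      Submodule.span F (Set.range fun i => B i) := by
  rw [Submodule.span_le]
  rintro _ ⟨i, rfl⟩
  have h : (P * B) i = ∑ j, P i j • B j := by
    ext l
    simp [Matrix.mul_apply]
  show (P * B) i ∈ _
  rw [h]
  exact Submodule.sum_mem _ fun j _ =>
    Submodule.smul_mem _ _ (Submodule.subset_span ⟨j, rfl⟩)

/-- With `G` SSO, `[G | H]` invertible, and `M = [0 | I]·[G | H]⁻¹`, the row space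
of `M` equals the row space of `Gᵀ J`; equivalently `M = P Gᵀ J` for some
invertible `P`. -/
theorem transfer_matrix_rowspace {F : Type*} [Field F] {N : ℕ}
    (G H : Matrix (Fin N ⊕ Fin N) (Fin N) F)
    (hG : Gᵀ * Jmat F N * G = 0) (hGrank : G.rank = N)
    (hGH : IsUnit (Matrix.fromCols G H))
    (M : Matrix (Fin N) (Fin N ⊕ Fin N) F)
    (hM : M = Matrix.fromCols (0 : Matrix (Fin N) (Fin N) F) 1 *
      (Matrix.fromCols G H)⁻¹) :
    Submodule.span F (Set.range fun i => M i) =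
      Submodule.span F (Set.range fun i => (Gᵀ * Jmat F N) i) ∧
    ∃ P : Matrix (Fin N) (Fin N) F, IsUnit P ∧ M = P * (Gᵀ * Jmat F N) := by
  set A := Matrix.fromCols G H with hA
  set B := Gᵀ * Jmat F N with hB
  set K := B * H with hK
  have hAdet : IsUnit A.det := (Matrix.isUnit_iff_isUnit_det A).mp hGH
  have hAinv : A⁻¹ * A = 1 := Matrix.nonsing_inv_mul A hAdet
  have hAinv' : A * A⁻¹ = 1 := Matrix.mul_nonsing_inv A hAdet
  -- B * A = [0 | K]
  have hBA : B * A = Matrix.fromCols 0 K := by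
    rw [hA, Matrix.mul_fromCols, hB, hG]
  -- G.mulVec is injective from rank
  have hGinj : Function.Injective G.mulVec := by
    have h1 := G.mulVecLin.finrank_range_add_finrank_ker
    have h2 : Module.finrank F (LinearMap.range G.mulVecLin) = N := hGrank
    rw [h2] at h1
    have h3 : Module.finrank F (Fin N → F) = N := by simp
    rw [h3] at h1
    have hker : LinearMap.ker G.mulVecLin = ⊥ :=
      Submodule.finrank_eq_zero.mp (by omega)
    have := LinearMap.ker_eq_bot.mp hker
    exact this
  -- J is a unit
  have hJ : IsUnit (Jmat F N) := by
    have hJJ : Jmat F N * (-(Jmat F N)) = 1 := by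
      have h1 : Jmat F N * (-(Jmat F N)) =
          -(Matrix.fromBlocks (-1) 0 0 (-1)) := by
        simp [Jmat, Matrix.mul_neg, Matrix.fromBlocks_multiply]
      rw [h1, Matrix.fromBlocks_neg]
      simp
    exact (Matrix.isUnit_iff_isUnit_det _).mpr
      (Matrix.isUnit_det_of_right_inverse hJJ)
  -- K is a unit: vecMul injective
  have hKunit : IsUnit K := by
    rw [← Matrix.vecMul_injective_iff_isUnit]
    have hinj : Function.Injective fun v => Matrix.vecMul v K := by
      intro x y hxy
      -- vecMul x (B*A) = vecMul y (B*A) since [0|K] rows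
      have hxy' : Matrix.vecMul x K = Matrix.vecMul y K := hxy
      have hBAeq : Matrix.vecMul x (B * A) = Matrix.vecMul y (B * A) := by
        rw [hBA]
        simp only [Matrix.vecMul_fromCols, hxy', Matrix.vecMul_zero]
      have hBeq : Matrix.vecMul x B = Matrix.vecMul y B := by
        have := congrArg (fun v => Matrix.vecMul v A⁻¹) hBAeq
        simpa [← Matrix.vecMul_vecMul, Matrix.vecMul_mulVec, hAinv',
          Matrix.vecMul_vecMul, hA] using by
          calc Matrix.vecMul x B = Matrix.vecMul (Matrix.vecMul x (B * A)) A⁻¹ := by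
                rw [Matrix.vecMul_vecMul, Matrix.mul_assoc, hAinv', Matrix.mul_one]
            _ = Matrix.vecMul (Matrix.vecMul y (B * A)) A⁻¹ := by rw [hBAeq]
            _ = Matrix.vecMul y B := by
                rw [Matrix.vecMul_vecMul, Matrix.mul_assoc, hAinv', Matrix.mul_one]
      -- vecMul x B = vecMul x Gᵀ * J, cancel J then Gᵀ
      have hGT : Matrix.vecMul x Gᵀ = Matrix.vecMul y Gᵀ := by
        have := congrArg (fun v => Matrix.vecMul v (Jmat F N)⁻¹) hBeq
        simpa [hB, ← Matrix.vecMul_vecMul, Matrix.vecMul_vecMul, Matrix.mul_assoc,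
          Matrix.mul_nonsing_inv _ ((Matrix.isUnit_iff_isUnit_det _).mp hJ)] using this
      have : G.mulVec x = G.mulVec y := by
        ext j
        have := congrFun hGT j
        simpa [Matrix.vecMul, Matrix.mulVec, dotProduct, Matrix.transpose_apply,
          mul_comm] using this
      exact hGinj this
    exact hinj
  -- M * A = [0 | 1]
  have hMA : M * A = Matrix.fromCols 0 1 := by
    rw [hM]
    exact (Matrix.mul_assoc _ A⁻¹ A).trans (by rw [hAinv, Matrix.mul_one])
  -- M = K⁻¹ * B
  have hMeq : M = K⁻¹ * B := by
    have hKdet := (Matrix.isUnit_iff_isUnit_det K).mp hKunit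
    have h1 : (K⁻¹ * B) * A = Matrix.fromCols 0 1 := by
      rw [Matrix.mul_assoc, hBA, Matrix.mul_fromCols, Matrix.mul_zero,
        Matrix.nonsing_inv_mul K hKdet]
    have := hMA.trans h1.symm
    calc M = M * A * A⁻¹ := by rw [Matrix.mul_assoc, hAinv', Matrix.mul_one]
      _ = (K⁻¹ * B) * A * A⁻¹ := by rw [this]
      _ = K⁻¹ * B := by rw [Matrix.mul_assoc, hAinv', Matrix.mul_one]
  have hKinvUnit : IsUnit K⁻¹ := (Matrix.isUnit_iff_isUnit_det _).mpr
    (Matrix.isUnit_nonsing_inv_det K ((Matrix.isUnit_iff_isUnit_det K).mp hKunit))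
  refine ⟨?_, K⁻¹, hKinvUnit, hMeq⟩
  apply le_antisymm
  · rw [hMeq]; exact span_rows_mul_le _ _
  · have : B = K * M := by
      rw [hMeq, ← Matrix.mul_assoc,
        Matrix.mul_nonsing_inv K ((Matrix.isUnit_iff_isUnit_det K).mp hKunit),
        Matrix.one_mul]
    conv_lhs => rw [this]
    exact span_rows_mul_le _ _
end

section
/- Let M = [M_l | M_r] ∈ F_q^{N×2N} with Mᵀ strongly self-orthogonal (M J Mᵀ = 0, rank M = N). Then there exists a diagonal matrix Σ ∈ {0,1}^{N×N} such that, setting M' = M · [[I-Σ, Σ], [-Σ, I-Σ]] = [M'_l | M'_r], the matrix (M')ᵀ is strongly self-orthogonal and M'_l is invertible. -/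
open Matrix

/-- Signed column-swap lemma: for any `M` with SSO transpose there is a diagonal
0-1 matrix `Σ` such that `M' = M·[[I-Σ, Σ],[-Σ, I-Σ]]` has SSO transpose and
invertible left half. -/
theorem signed_column_swap {F : Type*} [Field F] {N : ℕ}
    (M : Matrix (Fin N) (Fin N ⊕ Fin N) F)
    (hM : M * Jmat F N * Mᵀ = 0) (hrank : M.rank = N) :
    ∃ Sg : Matrix (Fin N) (Fin N) F, Sg.IsDiag ∧ (∀ i, Sg i i = 0 ∨ Sg i i = 1) ∧
      (M * Matrix.fromBlocks (1 - Sg) Sg (-Sg) (1 - Sg)) * Jmat F N *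
        (M * Matrix.fromBlocks (1 - Sg) Sg (-Sg) (1 - Sg))ᵀ = 0 ∧
      (M * Matrix.fromBlocks (1 - Sg) Sg (-Sg) (1 - Sg)).rank = N ∧
      IsUnit ((M * Matrix.fromBlocks (1 - Sg) Sg (-Sg) (1 - Sg)).submatrix id Sum.inl) := by
  classical
  set A : Matrix (Fin N) (Fin N) F := M.submatrix id Sum.inl with hAdef
  set B : Matrix (Fin N) (Fin N) F := M.submatrix id Sum.inr with hBdef
  have hMcols : M = fromCols A B := by
    ext j s; cases s <;> simp [fromCols, hAdef, hBdef]
  -- symmetry from hM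
  have hsym : A * Bᵀ = B * Aᵀ := by
    have h1 : M * Jmat F N * Mᵀ = B * Aᵀ - A * Bᵀ := by
      rw [hMcols, Jmat, transpose_fromCols, fromCols_mul_fromBlocks,
        fromCols_mul_fromRows]
      simp [sub_eq_add_neg, Matrix.neg_mul, Matrix.mul_neg]
    rw [h1] at hM
    exact (sub_eq_zero.mp hM).symm
  -- full row rank gives trivial left kernel
  have hker : ∀ v : Fin N → F, v ᵥ* M = 0 → v = 0 := by
    intro v hv
    have hrt : (Mᵀ).rank = N := by rw [M.rank_transpose]; exact hrank
    have hrn := LinearMap.finrank_range_add_finrank_ker (Mᵀ).mulVecLin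
    have hdom : Module.finrank F (Fin N → F) = N := by simp
    rw [hdom] at hrn
    have hrr : Module.finrank F (LinearMap.range (Mᵀ).mulVecLin) = N := hrt
    have hk0 : Module.finrank F (LinearMap.ker (Mᵀ).mulVecLin) = 0 := by omega
    have hkbot : LinearMap.ker (Mᵀ).mulVecLin = ⊥ := Submodule.finrank_eq_zero.mp hk0
    have hmem : v ∈ LinearMap.ker (Mᵀ).mulVecLin := by
      simp only [LinearMap.mem_ker, mulVecLin_apply, mulVec_transpose]
      exact hv
    rw [hkbot] at hmem
    simpa using hmem
  -- columns of A
  set c : Fin N → (Fin N → F) := fun i j => A j i with hcdef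
  obtain ⟨b, hbsub, hbspan, hbind⟩ := exists_linearIndependent F (Set.range c)
  choose f hf using fun v : b => (hbsub v.2 : (v : Fin N → F) ∈ Set.range c)
  have finj : Function.Injective f := by
    intro x y hxy
    have := (hf x).symm.trans (hxy ▸ hf y)
    exact Subtype.ext this
  set T : Set (Fin N) := Set.range f with hTdef
  have hcT : c '' T = b := by
    ext x
    constructor
    · rintro ⟨i, ⟨v, rfl⟩, rfl⟩
      rw [hf v]; exact v.2
    · intro hx
      exact ⟨f ⟨x, hx⟩, ⟨⟨x, hx⟩, rfl⟩, hf ⟨x, hx⟩⟩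
  -- (P1) every column of A is in the span of the T-columns
  have hP1 : ∀ i, c i ∈ Submodule.span F (c '' T) := by
    intro i
    rw [hcT, hbspan]
    exact Submodule.subset_span (Set.mem_range_self i)
  -- (P2) the T-columns are linearly independent
  have hP2 : LinearIndependent F (fun i : T => c i) := by
    have he : (fun i : T => c i) ∘ (Equiv.ofInjective f finj) = fun v : b => (v : Fin N → F) := by
      funext v
      simp [Equiv.ofInjective_apply, hf v]
    exact (linearIndependent_equiv (Equiv.ofInjective f finj)).mp (he.symm ▸ hbind)
  -- the diagonal matrix
  set d : Fin N → F := fun i => if i ∈ T then 0 else 1 with hddef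
  refine ⟨diagonal d, isDiag_diagonal d, ?_, ?_⟩
  · intro i
    by_cases h : i ∈ T <;> simp [hddef, h]
  set Sg := diagonal d with hSgdef
  have hSg2 : Sg * Sg = Sg := by
    have hdd : (fun i => d i * d i) = d := by
      funext i
      by_cases h : i ∈ T <;> simp [hddef, h]
    rw [hSgdef, diagonal_mul_diagonal, hdd]
  set P : Matrix (Fin N ⊕ Fin N) (Fin N ⊕ Fin N) F := fromBlocks (1 - Sg) Sg (-Sg) (1 - Sg)
    with hPdef
  have hSgt : Sgᵀ = Sg := diagonal_transpose d
  have hPt : Pᵀ = fromBlocks (1 - Sg) (-Sg) Sg (1 - Sg) := by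
    rw [hPdef, fromBlocks_transpose, transpose_sub, transpose_one, hSgt, transpose_neg, hSgt]
  have hfb : ∀ a b c d a' b' c' d' : Matrix (Fin N) (Fin N) F, a = a' → b = b' → c = c' →
      d = d' → fromBlocks a b c d = fromBlocks a' b' c' d' := by
    rintro _ _ _ _ _ _ _ _ rfl rfl rfl rfl; rfl
  have hPJPt : P * Jmat F N * Pᵀ = Jmat F N := by
    rw [hPdef, hPt, Jmat, fromBlocks_multiply, fromBlocks_multiply]
    refine hfb _ _ _ _ _ _ _ _ ?_ ?_ ?_ ?_ <;>
      simp only [Matrix.mul_zero, Matrix.mul_one, Matrix.mul_neg, Matrix.neg_mul,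
        zero_add, add_zero, Matrix.zero_mul, neg_neg, Matrix.sub_mul,
        Matrix.mul_sub, Matrix.one_mul, hSg2] <;> abel
  have hPPt : P * Pᵀ = 1 := by
    rw [hPdef, hPt, fromBlocks_multiply]
    have h11 : (1 - Sg) * (1 - Sg) + Sg * Sg = 1 := by
      simp only [Matrix.sub_mul, Matrix.mul_sub, Matrix.one_mul, Matrix.mul_one, hSg2]; abel
    have h12 : (1 - Sg) * (-Sg) + Sg * (1 - Sg) = 0 := by
      simp only [Matrix.mul_neg, Matrix.sub_mul, Matrix.mul_sub, Matrix.one_mul,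
        Matrix.mul_one, hSg2]; abel
    have h21 : (-Sg) * (1 - Sg) + (1 - Sg) * Sg = 0 := by
      simp only [Matrix.neg_mul, Matrix.sub_mul, Matrix.mul_sub, Matrix.one_mul,
        Matrix.mul_one, hSg2]; abel
    have h22 : (-Sg) * (-Sg) + (1 - Sg) * (1 - Sg) = 1 := by
      simp only [Matrix.neg_mul, Matrix.mul_neg, neg_neg, Matrix.sub_mul, Matrix.mul_sub,
        Matrix.one_mul, Matrix.mul_one, hSg2]; abel
    rw [h11, h12, h21, h22, ← fromBlocks_one]
  refine ⟨?_, ?_, ?_⟩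
  · -- SSO preserved
    calc M * P * Jmat F N * (M * P)ᵀ
        = M * (P * Jmat F N * Pᵀ) * Mᵀ := by
          rw [transpose_mul]; simp only [Matrix.mul_assoc]
      _ = 0 := by rw [hPJPt, hM]
  · -- rank preserved
    refine le_antisymm (le_trans (rank_mul_le_left M P) (le_of_eq hrank)) ?_
    have : M = M * P * Pᵀ := by rw [Matrix.mul_assoc, hPPt, Matrix.mul_one]
    calc N = M.rank := hrank.symm
      _ = (M * P * Pᵀ).rank := by rw [← this]
      _ ≤ (M * P).rank := rank_mul_le_left _ _
  · -- invertibility of the left half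
    set L : Matrix (Fin N) (Fin N) F := (M * P).submatrix id Sum.inl with hLdef
    have hL : ∀ j i, L j i = (1 - d i) * A j i - d i * B j i := by
      intro j i
      show (M * P) j (Sum.inl i) = _
      rw [mul_apply, Fintype.sum_sum_type]
      have e1 : ∀ k, M j (Sum.inl k) * P (Sum.inl k) (Sum.inl i)
          = (if k = i then (1 - d k) * A j k else 0) := by
        intro k
        rw [hPdef]
        by_cases h : k = i <;>
          simp [fromBlocks_apply₁₁, Matrix.sub_apply, one_apply, hSgdef, diagonal_apply, h, hAdef,
            mul_comm]
      have e2 : ∀ k, M j (Sum.inr k) * P (Sum.inr k) (Sum.inl i)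
          = (if k = i then -(d k * B j k) else 0) := by
        intro k
        rw [hPdef]
        by_cases h : k = i <;>
          simp [fromBlocks_apply₂₁, Matrix.neg_apply, hSgdef, diagonal_apply, h, hBdef, mul_comm]
      rw [Finset.sum_congr rfl fun k _ => e1 k, Finset.sum_congr rfl fun k _ => e2 k,
        Finset.sum_ite_eq' Finset.univ i, Finset.sum_ite_eq' Finset.univ i]
      simp [sub_eq_add_neg]
    have key : ∀ v : Fin N → F, v ᵥ* L = 0 → v = 0 := by
      intro v hv
      have hvcol : ∀ i, (∑ j, v j * L j i) = 0 := by
        intro i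
        have := congrFun hv i
        simpa [vecMul, dotProduct] using this
      have hvT : ∀ i ∈ T, (∑ j, v j * A j i) = 0 := by
        intro i hi
        have := hvcol i
        simpa [hL, hddef, hi] using this
      have hvTc : ∀ i ∉ T, (∑ j, v j * B j i) = 0 := by
        intro i hi
        have := hvcol i
        simp only [hL, hddef, if_neg hi, sub_self, zero_mul, zero_sub, mul_neg, one_mul] at this
        simpa using this
      -- dot product with v kills all columns of A
      have hvA : v ᵥ* A = 0 := by
        let φ : (Fin N → F) →ₗ[F] F :=
          { toFun := fun x => v ⬝ᵥ x
            map_add' := fun x y => dotProduct_add v x y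
            map_smul' := fun m x => by simp [dotProduct_smul] }
        have hsub : c '' T ⊆ (LinearMap.ker φ : Set (Fin N → F)) := by
          rintro x ⟨i, hi, rfl⟩
          simp only [SetLike.mem_coe, LinearMap.mem_ker]
          show v ⬝ᵥ c i = 0
          simpa [dotProduct, hcdef] using hvT i hi
        have hle : Submodule.span F (c '' T) ≤ LinearMap.ker φ :=
          Submodule.span_le.mpr hsub
        funext i
        have : φ (c i) = 0 := hle (hP1 i)
        simpa [φ, dotProduct, vecMul, hcdef] using this
      -- the auxiliary vector w
      set w : Fin N → F := v ᵥ* B with hwdef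
      have hw0 : A *ᵥ w = 0 := by
        rw [hwdef, ← mulVec_transpose, mulVec_mulVec, hsym, ← mulVec_mulVec,
          mulVec_transpose, hvA, mulVec_zero]
      have hwTc : ∀ i ∉ T, w i = 0 := by
        intro i hi
        simpa [hwdef, vecMul, dotProduct] using hvTc i hi
      have hsumT : (∑ i : T, w i • c i) = 0 := by
        have h1 : (∑ i : T, w i • c i) = ∑ i ∈ T.toFinset, w i • c i := by
          rw [Finset.sum_subtype T.toFinset (fun i => Set.mem_toFinset)]
        have h2 : (∑ i ∈ T.toFinset, w i • c i) = ∑ i : Fin N, w i • c i := by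
          refine Finset.sum_subset (Finset.subset_univ _) ?_
          intro i _ hi
          rw [hwTc i (by simpa [Set.mem_toFinset] using hi)]
          simp
        have h3 : (∑ i : Fin N, w i • c i) = A *ᵥ w := by
          funext j
          simp [mulVec, dotProduct, Finset.sum_apply, hcdef, mul_comm]
        rw [h1, h2, h3, hw0]
      have hwT : ∀ i : T, w i = 0 :=
        Fintype.linearIndependent_iff.mp hP2 (fun i : T => w i) hsumT
      have hw : w = 0 := by
        funext i
        by_cases hi : i ∈ T
        · exact hwT ⟨i, hi⟩
        · exact hwTc i hi
      -- conclude
      have hvM : v ᵥ* M = 0 := by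
        funext s
        cases s with
        | inl i => exact congrFun hvA i
        | inr i => exact congrFun hw i
      exact hker v hvM
    rw [← vecMul_injective_iff_isUnit]
    intro x y hxy
    have hxy' : x ᵥ* L = y ᵥ* L := hxy
    have hsub : (x - y) ᵥ* L = 0 := by
      rw [sub_vecMul, hxy', sub_self]
    have := key (x - y) hsub
    exact sub_eq_zero.mp this
end

section
/- Every matrix M ∈ F_q^{N×2N} with Mᵀ strongly self-orthogonal can be written as M = P · [I_N | S] · Λ, where P is an invertible N×N matrix, S is a symmetric N×N matrix, and Λ = [[I-Σ, Σ], [-Σ, I-Σ]]⁻¹ for some diagonal 0-1 matrix Σ. (Standard form of SSO matrices up to local invertible transformations.) -/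
open Matrix

/-- Noncommutative ring identity used to show `C·Dᵀ = D·Cᵀ`. -/
lemma sso_ring_helper {R : Type*} [Ring R] (a b a' b' s : R) (hs : s * s = s) :
    (a * (1 - s) - b * s) * (s * a' + (1 - s) * b')
      - (a * s + b * (1 - s)) * ((1 - s) * a' - s * b') = a * b' - b * a' := by
  have h1 : s * (1 - s) = 0 := by rw [mul_sub, mul_one, hs, sub_self]
  have h2 : (1 - s) * s = 0 := by rw [sub_mul, one_mul, hs, sub_self]
  have h3 : (1 - s) * (1 - s) = 1 - s := by
    rw [mul_sub, mul_one, h2, sub_zero]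
  have hs' : ∀ x : R, s * (s * x) = s * x := fun x => by rw [← mul_assoc, hs]
  have h1' : ∀ x : R, s * ((1 - s) * x) = 0 := fun x => by rw [← mul_assoc, h1, zero_mul]
  have h2' : ∀ x : R, (1 - s) * (s * x) = 0 := fun x => by rw [← mul_assoc, h2, zero_mul]
  have h3' : ∀ x : R, (1 - s) * ((1 - s) * x) = (1 - s) * x := fun x => by rw [← mul_assoc, h3]
  simp only [mul_add, mul_sub, sub_mul, add_mul, mul_assoc, hs', h1', h2', h3',
    mul_zero, zero_mul, mul_one, one_mul, sub_zero, zero_sub, add_zero, zero_add]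
  abel

/-- Standard form: every `M` with SSO transpose can be written as
`M = P·[I | S]·Λ` with `P` invertible, `S` symmetric, and `Λ` the inverse of a
signed column-swap matrix `[[I-Σ, Σ],[-Σ, I-Σ]]` for a diagonal 0-1 matrix `Σ`. -/
theorem sso_standard_form {F : Type*} [Field F] {N : ℕ}
    (M : Matrix (Fin N) (Fin N ⊕ Fin N) F)
    (hM : M * Jmat F N * Mᵀ = 0) (hrank : M.rank = N) :
    ∃ (P S Sg : Matrix (Fin N) (Fin N) F),
      IsUnit P ∧ Sᵀ = S ∧ Sg.IsDiag ∧ (∀ i, Sg i i = 0 ∨ Sg i i = 1) ∧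
      M = P * Matrix.fromCols (1 : Matrix (Fin N) (Fin N) F) S *
        (Matrix.fromBlocks (1 - Sg) Sg (-Sg) (1 - Sg))⁻¹ := by
  classical
  set A : Matrix (Fin N) (Fin N) F := M.toCols₁ with hA
  set B : Matrix (Fin N) (Fin N) F := M.toCols₂ with hB
  have hMAB : M = fromCols A B := (fromCols_toCols M).symm
  -- the symplectic condition gives `B * Aᵀ = A * Bᵀ`
  have hBA : B * Aᵀ = A * Bᵀ := by
    have h0 : M * Jmat F N * Mᵀ = B * Aᵀ - A * Bᵀ := by
      rw [hMAB, Jmat, fromCols_mul_fromBlocks, transpose_fromCols,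
        fromCols_mul_fromRows]
      simp [Matrix.mul_neg, sub_eq_add_neg]
    rw [h0] at hM
    exact sub_eq_zero.mp hM
  -- full row rank: left multiplication by a nonzero row vector is nonzero
  have hrowM : ∀ x : Fin N → F, x ᵥ* M = 0 → x = 0 := by
    intro x hx
    have hMt : Mᵀ.rank = N := by rw [M.rank_transpose]; exact hrank
    have hinj : LinearMap.ker Mᵀ.mulVecLin = ⊥ := by
      have hrn := LinearMap.finrank_range_add_finrank_ker Mᵀ.mulVecLin
      rw [Module.finrank_fin_fun (R := F)] at hrn
      have h0 : Module.finrank F (LinearMap.ker Mᵀ.mulVecLin) = 0 := by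
        have he : Matrix.rank Mᵀ = Module.finrank F (LinearMap.range Mᵀ.mulVecLin) := rfl
        rw [he] at hMt
        omega
      exact Submodule.finrank_eq_zero.mp h0
    have hx0 : x ∈ LinearMap.ker Mᵀ.mulVecLin := by
      show Mᵀ.mulVecLin x = 0
      rw [mulVecLin_apply, mulVec_transpose]
      exact hx
    rw [hinj] at hx0
    exact hx0
  -- choose a maximal independent set of columns of `A`
  obtain ⟨s, hs_ind, hs_max⟩ := exists_maximal_linearIndepOn F (fun i : Fin N => Aᵀ i)
  set d : Fin N → F := fun i => if i ∈ s then 0 else 1 with hd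
  have hd2 : ∀ i, d i * d i = d i := by
    intro i; by_cases h : i ∈ s <;> simp [hd, h]
  set Sg : Matrix (Fin N) (Fin N) F := diagonal d with hSg
  have hSgSg : Sg * Sg = Sg := by
    rw [hSg, diagonal_mul_diagonal]
    exact congrArg diagonal (funext hd2)
  set C : Matrix (Fin N) (Fin N) F := A * (1 - Sg) - B * Sg with hC
  set D : Matrix (Fin N) (Fin N) F := A * Sg + B * (1 - Sg) with hD
  -- the signed column-swap matrix
  set Λ : Matrix (Fin N ⊕ Fin N) (Fin N ⊕ Fin N) F :=
    fromBlocks (1 - Sg) Sg (-Sg) (1 - Sg) with hΛ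
  have hMΛ : M * Λ = fromCols C D := by
    rw [hMAB, hΛ, fromCols_mul_fromBlocks, hC, hD]
    rw [Matrix.mul_neg, ← sub_eq_add_neg]
  -- C is invertible
  have hCrow : ∀ x : Fin N → F, x ᵥ* C = 0 → x = 0 := by
    intro x hx
    set u : Fin N → F := x ᵥ* A with hu
    set v : Fin N → F := x ᵥ* B with hv
    have hone : (1 : Matrix (Fin N) (Fin N) F) - Sg = diagonal (fun i => 1 - d i) := by
      rw [hSg, ← diagonal_one, diagonal_sub]
    have hxi : ∀ i, u i * (1 - d i) - v i * d i = 0 := by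
      intro i
      have h1 : u ᵥ* diagonal (fun i => 1 - d i) - v ᵥ* diagonal d = 0 := by
        rw [hu, hv, vecMul_vecMul, vecMul_vecMul, ← hone, ← hSg, ← vecMul_sub, ← hC]
        exact hx
      have h2 := congrFun h1 i
      simpa [vecMul_diagonal] using h2
    -- u vanishes on s directly, and on the complement by maximality
    have hus : ∀ i ∈ s, u i = 0 := by
      intro i hi
      have h := hxi i
      simp [hd, hi] at h
      exact h
    have hdot : ∀ i, x ⬝ᵥ Aᵀ i = u i := by
      intro i
      simp [hu, vecMul, dotProduct, transpose_apply]
    have hspan : ∀ w ∈ Submodule.span F ((fun i : Fin N => Aᵀ i) '' s), x ⬝ᵥ w = 0 := by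
      intro w hw
      induction hw using Submodule.span_induction with
      | mem w hw =>
        obtain ⟨i, hi, rfl⟩ := hw
        rw [hdot]; exact hus i hi
      | zero => simp
      | add _ _ _ _ h1 h2 => simp [dotProduct_add, h1, h2]
      | smul a _ _ h1 => simp [dotProduct_smul, h1]
    have hu0 : u = 0 := by
      funext i
      by_cases hi : i ∈ s
      · exact hus i hi
      · obtain ⟨a, ha0, hmem⟩ := hs_max i hi
        have h := hspan _ hmem
        rw [dotProduct_smul] at h
        have hAi : x ⬝ᵥ Aᵀ i = 0 := by
          rcases mul_eq_zero.mp h with h' | h'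
          · exact absurd h' ha0
          · exact h'
        rw [hdot] at hAi
        exact hAi
    -- now use the symplectic relation to kill v
    have hvA : v ᵥ* Aᵀ = 0 := by
      have h1 : x ᵥ* (B * Aᵀ) = x ᵥ* (A * Bᵀ) := by rw [hBA]
      rw [← vecMul_vecMul, ← vecMul_vecMul, ← hu, ← hv, hu0, zero_vecMul] at h1
      exact h1
    have hAv : A *ᵥ v = 0 := by rw [← vecMul_transpose]; exact hvA
    have hvs : ∀ i, i ∉ s → v i = 0 := by
      intro i hi
      have h := hxi i
      simp [hd, hi] at h
      exact h
    have hv0 : v = 0 := by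
      haveI : Fintype s := Fintype.ofFinite s
      have hsum : ∑ i : s, v i • Aᵀ (i : Fin N) = 0 := by
        have hfull : ∑ i : Fin N, v i • Aᵀ i = 0 := by
          funext k
          have h : (∑ i : Fin N, v i • Aᵀ i) k = (A *ᵥ v) k := by
            simp [mulVec, dotProduct, Finset.sum_apply, transpose_apply, mul_comm]
          rw [h, hAv]
        have hsub : ∑ i ∈ s.toFinset, v i • Aᵀ i = ∑ i : Fin N, v i • Aᵀ i := by
          apply Finset.sum_subset (Finset.subset_univ _)
          intro i _ hi
          rw [Set.mem_toFinset] at hi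
          rw [hvs i hi, zero_smul]
        rw [← hfull, ← hsub]
        exact (Finset.sum_subtype s.toFinset (by simp) fun i => v i • Aᵀ i).symm
      have h := Fintype.linearIndependent_iff.mp hs_ind (fun i : s => v i) hsum
      funext i
      by_cases hi : i ∈ s
      · exact h ⟨i, hi⟩
      · exact hvs i hi
    have hxM : x ᵥ* M = 0 := by
      rw [hMAB, vecMul_fromCols, ← hu, ← hv, hu0, hv0]
      funext j; cases j <;> rfl
    exact hrowM x hxM
  have hCunit : IsUnit C := by
    rw [← vecMul_injective_iff_isUnit]
    intro x y hxy
    have hxy' : x ᵥ* C = y ᵥ* C := hxy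
    have h : (x - y) ᵥ* C = 0 := by rw [sub_vecMul, hxy', sub_self]
    exact sub_eq_zero.mp (hCrow _ h)
  have hCdet : IsUnit C.det := (isUnit_iff_isUnit_det C).mp hCunit
  have hCTdet : IsUnit Cᵀ.det := by rwa [det_transpose]
  -- the symmetry relation C Dᵀ = D Cᵀ
  have hSgT : Sgᵀ = Sg := diagonal_transpose d
  have hDT : Dᵀ = Sg * Aᵀ + (1 - Sg) * Bᵀ := by
    rw [hD, transpose_add, transpose_mul, transpose_mul, hSgT, transpose_sub,
      transpose_one, hSgT]
  have hCT : Cᵀ = (1 - Sg) * Aᵀ - Sg * Bᵀ := by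
    rw [hC, transpose_sub, transpose_mul, transpose_mul, hSgT, transpose_sub,
      transpose_one, hSgT]
  have hCD : C * Dᵀ = D * Cᵀ := by
    have key : C * Dᵀ - D * Cᵀ = A * Bᵀ - B * Aᵀ := by
      rw [hDT, hCT, hC, hD]
      exact sso_ring_helper A B Aᵀ Bᵀ Sg hSgSg
    rw [← hBA, sub_self] at key
    exact sub_eq_zero.mp key
  -- define S
  set S : Matrix (Fin N) (Fin N) F := C⁻¹ * D with hS
  have hCS : C * S = D := by
    rw [hS, ← Matrix.mul_assoc, Matrix.mul_nonsing_inv _ hCdet, Matrix.one_mul]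
  have hSsymm : Sᵀ = S := by
    have e1 : C⁻¹ * (C * Dᵀ) = Dᵀ := by
      rw [← Matrix.mul_assoc, Matrix.nonsing_inv_mul _ hCdet, Matrix.one_mul]
    have e2 : D * Cᵀ * Cᵀ⁻¹ = D := by
      rw [Matrix.mul_assoc, Matrix.mul_nonsing_inv _ hCTdet, Matrix.mul_one]
    calc Sᵀ = Dᵀ * Cᵀ⁻¹ := by rw [hS, transpose_mul, transpose_nonsing_inv]
      _ = C⁻¹ * (C * Dᵀ) * Cᵀ⁻¹ := by rw [e1]
      _ = C⁻¹ * (D * Cᵀ * Cᵀ⁻¹) := by rw [hCD, Matrix.mul_assoc, Matrix.mul_assoc]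
      _ = C⁻¹ * D := by rw [e2]
      _ = S := hS.symm
  -- Λ is invertible with inverse Λᵀ
  have hE1 : Sg * (1 - Sg) = 0 := by rw [Matrix.mul_sub, Matrix.mul_one, hSgSg, sub_self]
  have hE2 : (1 - Sg) * Sg = 0 := by rw [Matrix.sub_mul, Matrix.one_mul, hSgSg, sub_self]
  have hE3 : (1 - Sg) * (1 - Sg) = 1 - Sg := by
    rw [Matrix.mul_sub, Matrix.mul_one, hE2, sub_zero]
  have hΛΛT : Λ * Λᵀ = 1 := by
    rw [hΛ, fromBlocks_transpose, fromBlocks_multiply, transpose_sub, transpose_one, hSgT,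
      transpose_neg, hSgT]
    simp only [Matrix.mul_neg, Matrix.neg_mul, hE1, hE2, hE3, hSgSg, neg_neg,
      neg_zero, add_zero, zero_add]
    rw [show (1 : Matrix (Fin N) (Fin N) F) - Sg + Sg = 1 by abel,
      show Sg + ((1 : Matrix (Fin N) (Fin N) F) - Sg) = 1 by abel]
    exact fromBlocks_one
  have hΛinv : Λ⁻¹ = Λᵀ := inv_eq_right_inv hΛΛT
  refine ⟨C, S, Sg, hCunit, hSsymm, ?_, ?_, ?_⟩
  · rw [hSg]; exact isDiag_diagonal d
  · intro i
    rw [hSg, diagonal_apply_eq, hd]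
    by_cases h : i ∈ s <;> simp [h]
  · have h1 : C * fromCols 1 S = fromCols C D := by
      rw [mul_fromCols, Matrix.mul_one, hCS]
    rw [← hΛ, h1, ← hMΛ, hΛinv, Matrix.mul_assoc, hΛΛT, Matrix.mul_one]
end

section
/- A transfer matrix M = [M_l | M_r] ∈ F_q^{N×2N} is expressible as M = P·[I_N | S]·Λ with P ∈ GL_N(F_q), S symmetric, and Λ a local invertible transformation (block matrix [[Λ₁,Λ₂],[Λ₃,Λ₄]] of diagonal blocks with Λ₁Λ₄ - Λ₂Λ₃ invertible) if and only if rank(M) = N and there exists an invertible diagonal matrix Δ ∈ F_q^{N×N} such that the matrix M' = [M_l | M_r Δ] satisfies M' J (M')ᵀ = 0. -/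
open Matrix

section FeasAux

variable {F : Type*} [Field F] {N : ℕ}


lemma sandwich (A B : Matrix (Fin N) (Fin N) F) :
    fromCols A B * Jmat F N * (fromCols A B)ᵀ = B * Aᵀ - A * Bᵀ := by
  rw [Jmat, fromCols_mul_fromBlocks, transpose_fromCols, fromCols_mul_fromRows]
  simp [sub_eq_add_neg]

lemma mul_diag_diag (X : Matrix (Fin N) (Fin N) F) (a b : Fin N → F) :
    X * diagonal a * diagonal b = X * diagonal (fun i => a i * b i) := by
  rw [Matrix.mul_assoc, diagonal_mul_diagonal]

lemma MDD_eq (M : Matrix (Fin N) (Fin N) F) (a b c : Fin N → F) (h : ∀ i, a i * b i = c i) :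
    M * diagonal a * diagonal b = M * diagonal c := by
  rw [mul_diag_diag]
  congr 1
  exact congrArg diagonal (funext h)

lemma MDD_zero (M : Matrix (Fin N) (Fin N) F) (a b : Fin N → F) (h : ∀ i, a i * b i = 0) :
    M * diagonal a * diagonal b = 0 := by
  rw [MDD_eq M a b (fun _ => 0) h]
  have : diagonal (fun _ : Fin N => (0:F)) = 0 := by
    ext i j; by_cases hij : i = j <;> simp [diagonal_apply, hij]
  rw [this, Matrix.mul_zero]

lemma key_alg (d1 d2 d3 d4 e : Fin N → F) (S : Matrix (Fin N) (Fin N) F)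
    (h : ∀ i, (d1 i * d4 i - d2 i * d3 i) * e i = 1) :
    (diagonal d2 + S * diagonal d4) * diagonal e * (diagonal d1 + diagonal d3 * S) =
    (diagonal d1 + S * diagonal d3) * diagonal e * (diagonal d2 + diagonal d4 * S) := by
  simp only [Matrix.mul_add, Matrix.add_mul, ← Matrix.mul_assoc, diagonal_mul_diagonal,
    mul_diag_diag]
  have h1 : (fun i => d2 i * e i * d1 i) = (fun i => d1 i * e i * d2 i) := by funext i; ring
  have h2 : (fun i => d4 i * e i * d3 i) = (fun i => d3 i * e i * d4 i) := by funext i; ring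
  have h3 : (fun i => d3 i * e i * d2 i) = (fun i => d2 i * e i * d3 i) := by funext i; ring
  have h4 : (fun i => d4 i * e i * d1 i) = (fun i => 1 + d2 i * e i * d3 i) := by
    funext i; linear_combination h i
  have h5 : (fun i => d1 i * e i * d4 i) = (fun i => 1 + d2 i * e i * d3 i) := by
    funext i; linear_combination h i
  rw [h1, h2, h3, h4, h5]
  have h6 : Matrix.diagonal (fun i => 1 + d2 i * e i * d3 i)
      = 1 + Matrix.diagonal (fun i => d2 i * e i * d3 i) := by
    ext i j
    by_cases hij : i = j <;> simp [Matrix.diagonal_apply, Matrix.one_apply, hij]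
  rw [h6, Matrix.mul_add, Matrix.add_mul, Matrix.mul_one, Matrix.one_mul]
  abel

lemma isUnit_diagonal (v : Fin N → F) : IsUnit (diagonal v) ↔ ∀ i, v i ≠ 0 := by
  rw [Matrix.isUnit_iff_isUnit_det, det_diagonal, isUnit_iff_ne_zero, Finset.prod_ne_zero_iff]
  simp

lemma isUnit_of_vecMul (C : Matrix (Fin N) (Fin N) F)
    (h : ∀ v, v ᵥ* C = 0 → v = 0) : IsUnit C := by
  rw [Matrix.isUnit_iff_isUnit_det, isUnit_iff_ne_zero]
  intro hdet
  have hdt : Cᵀ.det = 0 := by rwa [det_transpose]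
  obtain ⟨v, hv, hv0⟩ := (Matrix.exists_mulVec_eq_zero_iff).mpr hdt
  exact hv (h v (by rw [← Matrix.mulVec_transpose]; exact hv0))

lemma vecMul_eq_zero {m : Type*} [Fintype m] (M : Matrix (Fin N) m F)
    (h : M.rank = N) (v : Fin N → F) (hv : v ᵥ* M = 0) : v = 0 := by
  have h' : Mᵀ.rank = N := by rw [Matrix.rank_transpose, h]
  have hker : LinearMap.ker (Mᵀ.mulVecLin) = ⊥ := by
    have hrn := LinearMap.finrank_range_add_finrank_ker (Mᵀ.mulVecLin)
    rw [Module.finrank_pi, Fintype.card_fin] at hrn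
    rw [Matrix.rank] at h'
    rw [h'] at hrn
    have : Module.finrank F (LinearMap.ker Mᵀ.mulVecLin) = 0 := by omega
    exact Submodule.finrank_eq_zero.mp this
  have : v ∈ LinearMap.ker (Mᵀ.mulVecLin) := by
    simp only [LinearMap.mem_ker, Matrix.mulVecLin_apply, Matrix.mulVec_transpose]
    exact hv
  rwa [hker, Submodule.mem_bot] at this

lemma exists_selection (A B : Matrix (Fin N) (Fin N) F)
    (horth : B * Aᵀ = A * Bᵀ) (hrank : (fromCols A B).rank = N) :
    ∃ χ : Fin N → F, (∀ i, χ i = 0 ∨ χ i = 1) ∧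
      IsUnit (A * diagonal χ + B * diagonal (fun i => 1 - χ i)) := by
  classical
  obtain ⟨I, hind, hspan⟩ := exists_maximal_linearIndepOn F (fun j : Fin N => Aᵀ j)
  refine ⟨fun i => if i ∈ I then 1 else 0, fun i => by by_cases h : i ∈ I <;> simp [h], ?_⟩
  apply isUnit_of_vecMul
  intro v hv
  have hv' : ∀ j, (v ᵥ* A) j * (if j ∈ I then (1:F) else 0)
      + (v ᵥ* B) j * (1 - if j ∈ I then (1:F) else 0) = 0 := by
    intro j
    have := congrFun hv j
    rwa [Matrix.vecMul_add, ← Matrix.vecMul_vecMul, ← Matrix.vecMul_vecMul, Pi.add_apply,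
      Matrix.vecMul_diagonal, Matrix.vecMul_diagonal, Pi.zero_apply] at this
  have hvAI : ∀ j ∈ I, (v ᵥ* A) j = 0 := by
    intro j hj
    have := hv' j
    simpa [hj] using this
  let φ : (Fin N → F) →ₗ[F] F :=
    { toFun := fun w => v ⬝ᵥ w
      map_add' := fun x y => dotProduct_add v x y
      map_smul' := fun c x => by simp [dotProduct_smul] }
  have hspanker : Submodule.span F ((fun j : Fin N => Aᵀ j) '' I) ≤ LinearMap.ker φ := by
    rw [Submodule.span_le]
    rintro x ⟨j, hj, rfl⟩
    simpa [φ, LinearMap.mem_ker] using (show v ⬝ᵥ Aᵀ j = 0 from hvAI j hj)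
  have hvA : v ᵥ* A = 0 := by
    funext j
    rw [Pi.zero_apply]
    by_cases hj : j ∈ I
    · exact hvAI j hj
    · obtain ⟨a, ha, hmem⟩ := hspan j hj
      have h1 : φ (a • Aᵀ j) = 0 := hspanker hmem
      rw [_root_.map_smul, smul_eq_mul] at h1
      rcases mul_eq_zero.mp h1 with h | h
      · exact absurd h ha
      · exact h
  set c := v ᵥ* B with hc
  have hcI : ∀ j, j ∉ I → c j = 0 := by
    intro j hj
    have := hv' j
    simpa [hj, hvA] using this
  have hAc : A *ᵥ c = 0 := by
    have h2 : A *ᵥ (Bᵀ *ᵥ v) = B *ᵥ (Aᵀ *ᵥ v) := by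
      rw [Matrix.mulVec_mulVec, Matrix.mulVec_mulVec, horth]
    rwa [Matrix.mulVec_transpose, Matrix.mulVec_transpose, hvA, Matrix.mulVec_zero] at h2
  haveI : Fintype ↥I := Set.Finite.fintype (Set.toFinite I)
  have hsum : ∑ j ∈ I.toFinset, c j • Aᵀ j = 0 := by
    have htot : ∑ j : Fin N, c j • Aᵀ j = 0 := by
      funext i
      have := congrFun hAc i
      rw [Matrix.mulVec, dotProduct] at this
      simpa [Finset.sum_apply, mul_comm] using this
    refine Eq.trans ?_ htot
    refine Finset.sum_subset (Finset.subset_univ _) ?_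
    intro x _ hx
    rw [Set.mem_toFinset] at hx
    rw [hcI x hx, zero_smul]
  have hcI' : ∀ j ∈ I, c j = 0 := by
    have hsub : ∑ x : ↥I, c x • Aᵀ (x : Fin N) = 0 := by
      rw [← hsum]
      exact Finset.sum_set_coe (s := I) (f := fun j => c j • Aᵀ j)
    intro j hj
    exact Fintype.linearIndependent_iff.mp hind (fun x => c x) hsub ⟨j, hj⟩
  have hcz : v ᵥ* B = 0 := by
    funext j
    rw [Pi.zero_apply]
    by_cases hj : j ∈ I
    · exact hcI' j hj
    · exact hcI j hj
  have hfc : v ᵥ* fromCols A B = 0 := by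
    rw [Matrix.vecMul_fromCols, hvA, hcz]
    simp
  exact vecMul_eq_zero _ hrank v hfc

lemma feas_forward (Ml Mr : Matrix (Fin N) (Fin N) F)
    (h : ∃ (P S L1 L2 L3 L4 : Matrix (Fin N) (Fin N) F),
        IsUnit P ∧ Sᵀ = S ∧
        L1.IsDiag ∧ L2.IsDiag ∧ L3.IsDiag ∧ L4.IsDiag ∧
        IsUnit (L1 * L4 - L2 * L3) ∧
        Matrix.fromCols Ml Mr =
          P * Matrix.fromCols (1 : Matrix (Fin N) (Fin N) F) S *
            Matrix.fromBlocks L1 L2 L3 L4) :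
    ((Matrix.fromCols Ml Mr).rank = N ∧
        ∃ Δ : Matrix (Fin N) (Fin N) F, Δ.IsDiag ∧ IsUnit Δ ∧
          Matrix.fromCols Ml (Mr * Δ) * Jmat F N *
            (Matrix.fromCols Ml (Mr * Δ))ᵀ = 0) := by
  obtain ⟨P, S, L1, L2, L3, L4, hP, hS, h1, h2, h3, h4, hU, hM⟩ := h
  set d1 := L1.diag; set d2 := L2.diag; set d3 := L3.diag; set d4 := L4.diag
  have e1 : L1 = diagonal d1 := h1.diagonal_diag.symm
  have e2 : L2 = diagonal d2 := h2.diagonal_diag.symm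
  have e3 : L3 = diagonal d3 := h3.diagonal_diag.symm
  have e4 : L4 = diagonal d4 := h4.diagonal_diag.symm
  rw [e1, e2, e3, e4] at hU hM
  have hne : ∀ i, d1 i * d4 i - d2 i * d3 i ≠ 0 := by
    rw [diagonal_mul_diagonal, diagonal_mul_diagonal, diagonal_sub] at hU
    exact (isUnit_diagonal _).mp hU
  set e : Fin N → F := fun i => (d1 i * d4 i - d2 i * d3 i)⁻¹ with he_def
  have he : ∀ i, (d1 i * d4 i - d2 i * d3 i) * e i = 1 := fun i => mul_inv_cancel₀ (hne i)
  -- Λ is invertible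
  set Λ : Matrix (Fin N ⊕ Fin N) (Fin N ⊕ Fin N) F :=
    fromBlocks (diagonal d1) (diagonal d2) (diagonal d3) (diagonal d4) with hΛ
  have hΛinv : Λ * fromBlocks (diagonal (fun i => d4 i * e i)) (diagonal (fun i => -(d2 i * e i)))
      (diagonal (fun i => -(d3 i * e i))) (diagonal (fun i => d1 i * e i)) = 1 := by
    rw [hΛ, fromBlocks_multiply]
    ext i j
    rcases i with i | i <;> rcases j with j | j <;>
      by_cases hij : i = j <;>
      simp [diagonal_mul_diagonal, diagonal_apply, Matrix.one_apply, hij] <;>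
      ring_nf <;> linear_combination he j
  have hΛU : IsUnit Λ := (Matrix.isUnit_iff_isUnit_det Λ).mpr (Matrix.isUnit_det_of_right_inverse hΛinv)
  constructor
  · rw [hM, Matrix.rank_mul_eq_left_of_isUnit_det Λ (P * fromCols 1 S)
        ((Matrix.isUnit_iff_isUnit_det Λ).mp hΛU),
      Matrix.rank_mul_eq_right_of_isUnit_det P (fromCols 1 S)
        ((Matrix.isUnit_iff_isUnit_det P).mp hP)]
    refine le_antisymm (le_trans (Matrix.rank_le_card_height _) (by simp)) ?_
    have h1' : fromCols (1 : Matrix (Fin N) (Fin N) F) S *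
        fromRows (1 : Matrix (Fin N) (Fin N) F) (0 : Matrix (Fin N) (Fin N) F) =
        (1 : Matrix (Fin N) (Fin N) F) := by
      rw [fromCols_mul_fromRows]; simp
    have := Matrix.rank_mul_le_left (fromCols (1 : Matrix (Fin N) (Fin N) F) S)
      (fromRows (1 : Matrix (Fin N) (Fin N) F) 0)
    rw [h1'] at this
    simpa using this
  · refine ⟨diagonal e, isDiag_diagonal e, (isUnit_diagonal e).mpr
      (fun i => inv_ne_zero (hne i)), ?_⟩
    rw [sandwich, sub_eq_zero]
    have hMl : Ml = P * (diagonal d1 + S * diagonal d3) := by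
      have := hM
      rw [Matrix.mul_assoc, fromCols_mul_fromBlocks, Matrix.one_mul, Matrix.one_mul,
        mul_fromCols, fromCols_ext_iff] at this
      exact this.1
    have hMr : Mr = P * (diagonal d2 + S * diagonal d4) := by
      have := hM
      rw [Matrix.mul_assoc, fromCols_mul_fromBlocks, Matrix.one_mul, Matrix.one_mul,
        mul_fromCols, fromCols_ext_iff] at this
      exact this.2
    rw [hMl, hMr]
    have key := key_alg d1 d2 d3 d4 e S he
    have hkey2 := congrArg (fun X => P * (X * Pᵀ)) key
    simp only [Matrix.transpose_mul, Matrix.transpose_add, Matrix.diagonal_transpose, hS,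
      Matrix.mul_assoc] at hkey2 ⊢
    exact hkey2

lemma feas_backward (Ml Mr : Matrix (Fin N) (Fin N) F)
    (hrank : (Matrix.fromCols Ml Mr).rank = N)
    (Δ0 : Matrix (Fin N) (Fin N) F) (hΔd : Δ0.IsDiag) (hΔu : IsUnit Δ0)
    (horth0 : Matrix.fromCols Ml (Mr * Δ0) * Jmat F N *
            (Matrix.fromCols Ml (Mr * Δ0))ᵀ = 0) :
    (∃ (P S L1 L2 L3 L4 : Matrix (Fin N) (Fin N) F),
        IsUnit P ∧ Sᵀ = S ∧
        L1.IsDiag ∧ L2.IsDiag ∧ L3.IsDiag ∧ L4.IsDiag ∧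
        IsUnit (L1 * L4 - L2 * L3) ∧
        Matrix.fromCols Ml Mr =
          P * Matrix.fromCols (1 : Matrix (Fin N) (Fin N) F) S *
            Matrix.fromBlocks L1 L2 L3 L4) := by
  set δ : Fin N → F := Δ0.diag with hδdef
  have hΔ : Δ0 = diagonal δ := hΔd.diagonal_diag.symm
  have hδ : ∀ i, δ i ≠ 0 := (isUnit_diagonal δ).mp (hΔ ▸ hΔu)
  set B : Matrix (Fin N) (Fin N) F := Mr * Δ0 with hBdef
  have horth : B * Mlᵀ = Ml * Bᵀ := by
    have := horth0
    rw [sandwich] at this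
    exact sub_eq_zero.mp this
  have hrank' : (fromCols Ml B).rank = N := by
    have hfc : fromCols Ml B = fromCols Ml Mr * (fromBlocks 1 0 0 Δ0 : Matrix (Fin N ⊕ Fin N) (Fin N ⊕ Fin N) F) := by
      rw [fromCols_mul_fromBlocks]
      simp [hBdef]
    rw [hfc]
    rw [Matrix.rank_mul_eq_left_of_isUnit_det (fromBlocks 1 0 0 Δ0) (fromCols Ml Mr) ?hdet]
    · exact hrank
    case hdet =>
      rw [det_fromBlocks_zero₂₁, det_one, one_mul]
      exact (Matrix.isUnit_iff_isUnit_det Δ0).mp hΔu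
  obtain ⟨χ, hχ01, hC⟩ := exists_selection Ml B horth hrank'
  set ψ : Fin N → F := fun i => 1 - χ i with hψdef
  set C : Matrix (Fin N) (Fin N) F := Ml * diagonal χ + B * diagonal ψ with hCdef
  set D : Matrix (Fin N) (Fin N) F := -(Ml * diagonal ψ) + B * diagonal χ with hDdef
  set Ci : Matrix (Fin N) (Fin N) F := ↑hC.unit⁻¹ with hCidef
  have hCi1 : C * Ci = 1 := hC.unit.mul_inv
  have hCi2 : Ci * C = 1 := hC.unit.inv_mul
  set S : Matrix (Fin N) (Fin N) F := Ci * D with hSdef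
  have hCS : C * S = D := by rw [hSdef, ← Matrix.mul_assoc, hCi1, Matrix.one_mul]
  -- pointwise facts
  have hχψ : ∀ i, χ i * ψ i = 0 := by
    intro i; rcases hχ01 i with h | h <;> simp [hψdef, h]
  have hψχ : ∀ i, ψ i * χ i = 0 := fun i => by rw [mul_comm]; exact hχψ i
  have hχχ : ∀ i, χ i * χ i = χ i := by
    intro i; rcases hχ01 i with h | h <;> simp [h]
  have hψψ : ∀ i, ψ i * ψ i = ψ i := by
    intro i; rcases hχ01 i with h | h <;> simp [hψdef, h]
  have hdone : diagonal (fun _ : Fin N => (1:F)) = (1 : Matrix (Fin N) (Fin N) F) := by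
    ext i j; by_cases hij : i = j <;> simp [diagonal_apply, Matrix.one_apply, hij]
  have hdd2 : diagonal χ + diagonal ψ = (1 : Matrix (Fin N) (Fin N) F) := by
    rw [diagonal_add]
    have : (fun i => χ i + ψ i) = fun _ : Fin N => (1:F) := by
      funext i; simp [hψdef]
    rw [this, hdone]
  have hdd1 : diagonal χ = (1 : Matrix (Fin N) (Fin N) F) - diagonal ψ := by
    rw [eq_sub_iff_add_eq, hdd2]
  -- D Cᵀ = C Dᵀ
  have hDC : D * Cᵀ = C * Dᵀ := by
    rw [hCdef, hDdef]
    simp only [Matrix.transpose_add, Matrix.transpose_mul, Matrix.transpose_neg,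
      Matrix.diagonal_transpose, Matrix.mul_add, Matrix.add_mul, Matrix.neg_mul,
      Matrix.mul_neg, ← Matrix.mul_assoc]
    rw [MDD_zero Ml ψ χ hψχ, MDD_zero Ml χ ψ hχψ, MDD_zero B χ ψ hχψ, MDD_zero B ψ χ hψχ,
      MDD_eq Ml ψ ψ ψ hψψ, MDD_eq B χ χ χ hχχ, MDD_eq Ml χ χ χ hχχ, MDD_eq B ψ ψ ψ hψψ]
    simp only [Matrix.zero_mul, neg_zero, Matrix.mul_assoc, add_zero, zero_add]
    rw [hdd1]
    simp only [Matrix.sub_mul, Matrix.mul_sub, Matrix.one_mul]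
    rw [horth]
    abel
  -- symmetry of S
  have hCtCit : Cᵀ * Ciᵀ = 1 := by rw [← Matrix.transpose_mul, hCi2, Matrix.transpose_one]
  have hSsymm : Sᵀ = S := by
    rw [hSdef, Matrix.transpose_mul]
    calc Dᵀ * Ciᵀ = Ci * (C * (Dᵀ * Ciᵀ)) := by rw [← Matrix.mul_assoc, hCi2, Matrix.one_mul]
      _ = Ci * (C * Dᵀ * Ciᵀ) := by rw [Matrix.mul_assoc C]
      _ = Ci * (D * Cᵀ * Ciᵀ) := by rw [hDC]
      _ = Ci * (D * (Cᵀ * Ciᵀ)) := by rw [Matrix.mul_assoc D]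
      _ = Ci * D := by rw [hCtCit, Matrix.mul_one]
  set ι : Fin N → F := fun i => (δ i)⁻¹ with hιdef
  refine ⟨C, S, diagonal χ, diagonal (fun i => ψ i * ι i), -(diagonal ψ),
    diagonal (fun i => χ i * ι i), hC, hSsymm, isDiag_diagonal _, isDiag_diagonal _,
    (isDiag_diagonal ψ).neg, isDiag_diagonal _, ?_, ?_⟩
  · -- IsUnit (L1*L4 - L2*L3)
    rw [Matrix.mul_neg, sub_neg_eq_add, diagonal_mul_diagonal, diagonal_mul_diagonal,
      diagonal_add]
    have hfun : (fun i => χ i * (χ i * ι i) + ψ i * ι i * ψ i) = fun i => ι i := by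
      funext i
      rcases hχ01 i with h | h <;> simp [hψdef, h]
    rw [hfun]
    exact (isUnit_diagonal ι).mpr (fun i => inv_ne_zero (hδ i))
  · -- main factorization
    rw [Matrix.mul_assoc, fromCols_mul_fromBlocks, Matrix.one_mul, Matrix.one_mul,
      mul_fromCols, fromCols_ext_iff]
    have hCχ : C * diagonal χ = Ml * diagonal χ := by
      rw [hCdef, Matrix.add_mul, MDD_zero B ψ χ hψχ, add_zero, MDD_eq Ml χ χ χ hχχ]
    have hDψ : D * diagonal ψ = -(Ml * diagonal ψ) := by
      rw [hDdef, Matrix.add_mul, Matrix.neg_mul, MDD_zero B χ ψ hχψ, add_zero,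
        MDD_eq Ml ψ ψ ψ hψψ]
    constructor
    · -- Ml component
      rw [Matrix.mul_add, Matrix.mul_neg, Matrix.mul_neg, ← Matrix.mul_assoc, hCS,
        hCχ, hDψ, neg_neg, ← Matrix.mul_add, hdd2, Matrix.mul_one]
    · -- Mr component
      have hCψι : C * diagonal (fun i => ψ i * ι i) = B * diagonal (fun i => ψ i * ι i) := by
        rw [hCdef, Matrix.add_mul,
          MDD_zero Ml χ (fun i => ψ i * ι i) (fun i => by rw [← mul_assoc, hχψ i, zero_mul]),
          zero_add, MDD_eq B ψ (fun i => ψ i * ι i) (fun i => ψ i * ι i)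
            (fun i => by rw [← mul_assoc, hψψ i])]
      have hDχι : D * diagonal (fun i => χ i * ι i) = B * diagonal (fun i => χ i * ι i) := by
        rw [hDdef, Matrix.add_mul, Matrix.neg_mul,
          MDD_zero Ml ψ (fun i => χ i * ι i) (fun i => by rw [← mul_assoc, hψχ i, zero_mul]),
          neg_zero, zero_add, MDD_eq B χ (fun i => χ i * ι i) (fun i => χ i * ι i)
            (fun i => by rw [← mul_assoc, hχχ i])]
      rw [Matrix.mul_add, ← Matrix.mul_assoc, hCS, hCψι, hDχι, ← Matrix.mul_add, diagonal_add]
      have hfun2 : (fun i => ψ i * ι i + χ i * ι i) = fun i => ι i := by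
        funext i
        rcases hχ01 i with h | h <;> simp [hψdef, h]
      rw [hfun2, hBdef, hΔ, MDD_eq Mr δ ι (fun _ => 1) (fun i => mul_inv_cancel₀ (hδ i)), hdone,
        Matrix.mul_one]

end FeasAux

/-- Feasibility test: `M = [M_l | M_r]` is expressible as `P·[I | S]·Λ` with `P`
invertible, `S` symmetric, `Λ` an LIT (diagonal blocks `Λᵢ` with
`Λ₁Λ₄ - Λ₂Λ₃` invertible) iff `rank M = N` and there is an invertible diagonal
`Δ` with `[M_l | M_r Δ]·J·[M_l | M_r Δ]ᵀ = 0`. -/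
theorem feasibility_test {F : Type*} [Field F] {N : ℕ}
    (Ml Mr : Matrix (Fin N) (Fin N) F) :
    (∃ (P S L1 L2 L3 L4 : Matrix (Fin N) (Fin N) F),
        IsUnit P ∧ Sᵀ = S ∧
        L1.IsDiag ∧ L2.IsDiag ∧ L3.IsDiag ∧ L4.IsDiag ∧
        IsUnit (L1 * L4 - L2 * L3) ∧
        Matrix.fromCols Ml Mr =
          P * Matrix.fromCols (1 : Matrix (Fin N) (Fin N) F) S *
            Matrix.fromBlocks L1 L2 L3 L4) ↔
      ((Matrix.fromCols Ml Mr).rank = N ∧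
        ∃ Δ : Matrix (Fin N) (Fin N) F, Δ.IsDiag ∧ IsUnit Δ ∧
          Matrix.fromCols Ml (Mr * Δ) * Jmat F N *
            (Matrix.fromCols Ml (Mr * Δ))ᵀ = 0) := by
  constructor
  · exact feas_forward Ml Mr
  · rintro ⟨hrank, Δ, hΔd, hΔu, horth⟩
    exact feas_backward Ml Mr hrank Δ hΔd hΔu horth
end

section
/- Let α₁,…,α_n be distinct elements of F_q and u₁,…,u_n nonzero elements. Define v_j = u_j⁻¹ · ∏_{i≠j} (α_j - α_i)⁻¹. Then the n×k generalized Reed–Solomon generator matrix G_{GRS(α,u)} (with (i,m) entry u_i α_i^{m-1}, 1 ≤ m ≤ k) and the n×(n-k) matrix G_{GRS(α,v)} (with (i,m) entry v_i α_i^{m-1}, 1 ≤ m ≤ n-k) satisfy G_{GRS(α,u)}ᵀ · G_{GRS(α,v)} = 0, i.e., GRS(α,v) with dimension n-k is contained in the dual of GRS(α,u) with dimension k. -/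
open Matrix

open Polynomial Finset Lagrange

lemma coeff_interpolate_top {F : Type*} [Field F] {n : ℕ} (α : Fin n → F)
    (hα : Function.Injective α) (r : Fin n → F) :
    (Lagrange.interpolate Finset.univ α r).coeff (n - 1) =
      ∑ i, r i * Lagrange.nodalWeight Finset.univ α i := by
  rw [Lagrange.interpolate_apply, Polynomial.finset_sum_coeff]
  refine Finset.sum_congr rfl fun i _ => ?_
  rw [
    Lagrange.basis_eq_prod_sub_inv_mul_nodal_div (Finset.mem_univ i),
    ← Lagrange.nodal_erase_eq_nodal_div (Finset.mem_univ i), ← mul_assoc, ← Polynomial.C_mul,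
    Polynomial.coeff_C_mul]
  have hmon : (Lagrange.nodal ((Finset.univ : Finset (Fin n)).erase i) α).Monic :=
    Lagrange.nodal_monic
  have hdeg : (Lagrange.nodal ((Finset.univ : Finset (Fin n)).erase i) α).natDegree = n - 1 := by
    rw [Lagrange.natDegree_nodal, Finset.card_erase_of_mem (Finset.mem_univ i),
      Finset.card_univ, Fintype.card_fin]
  rw [← hdeg, hmon.coeff_natDegree, mul_one]

lemma key_sum {F : Type*} [Field F] {n : ℕ} (α : Fin n → F)
    (hα : Function.Injective α) {m : ℕ} (hm : m + 1 < n) :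
    ∑ i, α i ^ m * (∏ j ∈ Finset.univ.erase i, (α i - α j))⁻¹ = 0 := by
  have hinj : Set.InjOn α (Finset.univ : Finset (Fin n)) := fun a _ b _ h => hα h
  have hcard : ((Finset.univ : Finset (Fin n)).card : WithBot ℕ) = (n : WithBot ℕ) := by
    simp
  have hdeg : (X ^ m : F[X]).degree < ((Finset.univ : Finset (Fin n)).card : WithBot ℕ) := by
    rw [Polynomial.degree_X_pow, hcard]
    exact_mod_cast lt_of_lt_of_le (Nat.lt_succ_self m) (le_of_lt hm)
  have heq := Lagrange.eq_interpolate hinj hdeg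
  have h0 : (X ^ m : F[X]).coeff (n - 1) = 0 := by
    rw [Polynomial.coeff_X_pow]
    have : m ≠ n - 1 := by omega
    simp [this, Ne.symm this]
  rw [heq, coeff_interpolate_top α hα] at h0
  rw [← h0]
  refine Finset.sum_congr rfl fun i _ => ?_
  rw [Lagrange.nodalWeight, Finset.prod_inv_distrib, Polynomial.eval_pow, Polynomial.eval_X]


/-- Dual GRS construction: with distinct `α i`, nonzero `u i`, and
`v j = u j⁻¹ · (∏_{i ≠ j} (α j - α i))⁻¹`, the GRS generator matrices of
dimensions `k` and `n - k` satisfy `G_uᵀ · G_v = 0`. -/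
theorem grs_dual_orthogonal {F : Type*} [Field F] {n k : ℕ} (hk : k ≤ n)
    (α u : Fin n → F) (hα : Function.Injective α) (hu : ∀ i, u i ≠ 0) :
    (Matrix.of fun (i : Fin n) (m : Fin k) => u i * α i ^ (m : ℕ))ᵀ *
      (Matrix.of fun (i : Fin n) (m : Fin (n - k)) =>
        ((u i)⁻¹ * (∏ j ∈ Finset.univ.erase i, (α i - α j))⁻¹) * α i ^ (m : ℕ)) = 0 := by
  ext a b
  rw [Matrix.mul_apply]
  simp only [Matrix.transpose_apply, Matrix.of_apply, Matrix.zero_apply]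
  have ha := a.isLt
  have hb := b.isLt
  have hm : (a : ℕ) + (b : ℕ) + 1 < n := by omega
  calc (∑ i, u i * α i ^ (a : ℕ) *
        ((u i)⁻¹ * (∏ j ∈ Finset.univ.erase i, (α i - α j))⁻¹ * α i ^ (b : ℕ)))
      = ∑ i, α i ^ ((a : ℕ) + (b : ℕ)) *
          (∏ j ∈ Finset.univ.erase i, (α i - α j))⁻¹ := by
        refine Finset.sum_congr rfl fun i _ => ?_
        have h := hu i
        rw [pow_add, show u i * α i ^ (a : ℕ) *
            ((u i)⁻¹ * (∏ j ∈ Finset.univ.erase i, (α i - α j))⁻¹ * α i ^ (b : ℕ)) =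
            (u i * (u i)⁻¹) * (α i ^ (a : ℕ) * α i ^ (b : ℕ) *
              (∏ j ∈ Finset.univ.erase i, (α i - α j))⁻¹) from by ring,
          mul_inv_cancel₀ h, one_mul]
    _ = 0 := key_sum α hα hm
end

section
/- Let N ≥ 1, let α₁,…,α_N be distinct elements of F_q, let u₁,…,u_N be nonzero, and define v_j = u_j⁻¹ ∏_{i≠j}(α_j - α_i)⁻¹. Let G ∈ F_q^{2N×N} be the block-diagonal matrix diag(G_u, G_v) where G_u is the N×⌈N/2⌉ GRS generator matrix with entries u_i α_i^{m-1} and G_v is the N×⌊N/2⌋ GRS generator matrix with entries v_i α_i^{m-1}. Then Gᵀ J G = 0 and rank(G) = N, i.e., G is strongly self-orthogonal. -/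
open Matrix

open Polynomial Finset in
/-- Key Lagrange identity: `∑ i, α i ^ k / ∏_{j ≠ i} (α i - α j) = 0` for `k ≤ N - 2`. -/
lemma grs_key_sum {F : Type*} [Field F] {N : ℕ} (α : Fin N → F) (hα : Function.Injective α)
    {k : ℕ} (hk : k + 2 ≤ N) :
    ∑ i, α i ^ k * (∏ j ∈ Finset.univ.erase i, (α i - α j))⁻¹ = 0 := by
  have hinj : Set.InjOn α (Finset.univ : Finset (Fin N)) := hα.injOn
  have hcard : #(Finset.univ : Finset (Fin N)) = N := by simp
  have hdeg : (X ^ k : F[X]).degree < #(Finset.univ : Finset (Fin N)) := by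
    rw [degree_X_pow, hcard]
    exact_mod_cast (by omega : k < N)
  have heq := Lagrange.eq_interpolate (v := α) hinj hdeg
  have hco := congrArg (fun p : F[X] => p.coeff (N - 1)) heq
  simp only [Lagrange.interpolate_apply, eval_pow, eval_X] at hco
  rw [coeff_X_pow, if_neg (by omega), finset_sum_coeff] at hco
  have hbasis : ∀ i : Fin N,
      (Lagrange.basis Finset.univ α i).coeff (N - 1)
        = (∏ j ∈ Finset.univ.erase i, (α i - α j))⁻¹ := by
    intro i
    have hnd : (Lagrange.basis Finset.univ α i).natDegree = N - 1 := by
      rw [Lagrange.natDegree_basis hinj (Finset.mem_univ i), hcard]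
    rw [← hnd, coeff_natDegree, Lagrange.basis, leadingCoeff_prod]
    rw [← Finset.prod_inv_distrib]
    refine Finset.prod_congr rfl fun j _ => ?_
    rw [Lagrange.basisDivisor, leadingCoeff_mul, leadingCoeff_C,
      (monic_X_sub_C (α j)).leadingCoeff, mul_one]
  refine Eq.trans ?_ hco.symm
  refine Finset.sum_congr rfl fun i _ => ?_
  rw [coeff_C_mul, hbasis i]

open Polynomial in
/-- A scaled Vandermonde-type matrix with `k ≤ N` columns has trivial kernel. -/
lemma grs_mulVec_eq_zero {F : Type*} [Field F] {N k : ℕ} (hk : k ≤ N)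
    (α w : Fin N → F) (hα : Function.Injective α) (hw : ∀ i, w i ≠ 0)
    (y : Fin k → F) (hy : ∀ i, ∑ m : Fin k, w i * α i ^ (m : ℕ) * y m = 0) :
    y = 0 := by
  set p : F[X] := ∑ m : Fin k, C (y m) * X ^ (m : ℕ) with hp
  have heval : ∀ i, p.eval (α i) = 0 := by
    intro i
    have h := hy i
    have h2 : w i * ∑ m : Fin k, y m * α i ^ (m : ℕ) = 0 := by
      rw [Finset.mul_sum]
      rw [← h]
      exact Finset.sum_congr rfl fun m _ => by ring
    have h3 : ∑ m : Fin k, y m * α i ^ (m : ℕ) = 0 :=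
      (mul_eq_zero.mp h2).resolve_left (hw i)
    simp [hp, eval_finset_sum, h3]
  have hdeg : p.degree < (k : WithBot ℕ) := by
    refine lt_of_le_of_lt (degree_sum_le _ _) ?_
    rw [Nat.cast_withBot, Finset.sup_lt_iff (WithBot.bot_lt_coe k)]
    intro m _
    refine lt_of_le_of_lt (degree_C_mul_X_pow_le _ _) ?_
    rw [Nat.cast_withBot, WithBot.coe_lt_coe]
    exact m.isLt
  have hpz : p = 0 := by
    rcases eq_or_ne p 0 with h | h
    · exact h
    · refine eq_zero_of_natDegree_lt_card_of_eval_eq_zero p hα heval ?_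
      rw [Fintype.card_fin]
      have := (natDegree_lt_iff_degree_lt h).mpr hdeg
      omega
  funext m
  have : p.coeff (m : ℕ) = y m := by
    rw [hp, finset_sum_coeff]
    rw [Finset.sum_eq_single m]
    · simp
    · intro b _ hb
      rw [coeff_C_mul, coeff_X_pow, if_neg (fun h => hb (Fin.ext h.symm)), mul_zero]
    · simp
  rw [Pi.zero_apply, ← this, hpz, coeff_zero]

/-- The block-diagonal matrix `G = diag(G_u, G_v)` built from a GRS generator
matrix of dimension `⌈N/2⌉` and its dual-scaled GRS generator matrix of
dimension `⌊N/2⌋` is strongly self-orthogonal: `Gᵀ J G = 0` and `rank G = N`. -/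
theorem grs_block_diag_sso {F : Type*} [Field F] {N : ℕ} (hN : 1 ≤ N)
    (α u : Fin N → F) (hα : Function.Injective α) (hu : ∀ i, u i ≠ 0) :
    (Matrix.fromBlocks
        (Matrix.of fun (i : Fin N) (m : Fin ((N + 1) / 2)) => u i * α i ^ (m : ℕ)) 0 0
        (Matrix.of fun (i : Fin N) (m : Fin (N / 2)) =>
          ((u i)⁻¹ * (∏ j ∈ Finset.univ.erase i, (α i - α j))⁻¹) * α i ^ (m : ℕ)))ᵀ *
        Jmat F N *
        Matrix.fromBlocks
          (Matrix.of fun (i : Fin N) (m : Fin ((N + 1) / 2)) => u i * α i ^ (m : ℕ)) 0 0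
          (Matrix.of fun (i : Fin N) (m : Fin (N / 2)) =>
            ((u i)⁻¹ * (∏ j ∈ Finset.univ.erase i, (α i - α j))⁻¹) * α i ^ (m : ℕ)) = 0 ∧
      (Matrix.fromBlocks
          (Matrix.of fun (i : Fin N) (m : Fin ((N + 1) / 2)) => u i * α i ^ (m : ℕ)) 0 0
          (Matrix.of fun (i : Fin N) (m : Fin (N / 2)) =>
            ((u i)⁻¹ * (∏ j ∈ Finset.univ.erase i, (α i - α j))⁻¹) * α i ^ (m : ℕ))).rank
        = N := by
  set A : Matrix (Fin N) (Fin ((N + 1) / 2)) F :=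
    Matrix.of fun (i : Fin N) (m : Fin ((N + 1) / 2)) => u i * α i ^ (m : ℕ) with hA
  set B : Matrix (Fin N) (Fin (N / 2)) F :=
    Matrix.of fun (i : Fin N) (m : Fin (N / 2)) =>
      ((u i)⁻¹ * (∏ j ∈ Finset.univ.erase i, (α i - α j))⁻¹) * α i ^ (m : ℕ) with hB
  have hprod : ∀ i : Fin N, (∏ j ∈ Finset.univ.erase i, (α i - α j)) ≠ 0 := by
    intro i
    rw [Finset.prod_ne_zero_iff]
    intro j hj
    exact sub_ne_zero_of_ne fun h => (Finset.mem_erase.mp hj).1 (hα h).symm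
  have hAB : Aᵀ * B = 0 := by
    ext m m'
    rw [Matrix.mul_apply, Matrix.zero_apply]
    have key := grs_key_sum α hα (k := (m : ℕ) + (m' : ℕ))
      (by have := m.isLt; have := m'.isLt; omega)
    rw [← key]
    refine Finset.sum_congr rfl fun i _ => ?_
    simp only [hA, hB, Matrix.transpose_apply, Matrix.of_apply]
    rw [pow_add, show u i * α i ^ (m : ℕ) *
        ((u i)⁻¹ * (∏ j ∈ Finset.univ.erase i, (α i - α j))⁻¹ * α i ^ (m' : ℕ))
        = (u i * (u i)⁻¹) *
          (α i ^ (m : ℕ) * α i ^ (m' : ℕ) * (∏ j ∈ Finset.univ.erase i, (α i - α j))⁻¹) by ring,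
      mul_inv_cancel₀ (hu i), one_mul]
  have hBA : Bᵀ * A = 0 := by
    have := congrArg Matrix.transpose hAB
    rwa [Matrix.transpose_mul, Matrix.transpose_transpose, Matrix.transpose_zero] at this
  constructor
  · simp [Jmat, Matrix.fromBlocks_transpose, Matrix.fromBlocks_multiply, hAB, hBA,
      Matrix.mul_zero, Matrix.zero_mul, Matrix.mul_neg, Matrix.mul_one]
  · have hinj : Function.Injective (Matrix.fromBlocks A 0 0 B).mulVecLin := by
      rw [← LinearMap.ker_eq_bot, LinearMap.ker_eq_bot']
      intro x hx
      rw [Matrix.mulVecLin_apply, Matrix.fromBlocks_mulVec] at hx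
      have hx1 : A.mulVec (x ∘ Sum.inl) = 0 := by
        funext i
        have := congrFun hx (Sum.inl i)
        simpa using this
      have hx2 : B.mulVec (x ∘ Sum.inr) = 0 := by
        funext i
        have := congrFun hx (Sum.inr i)
        simpa using this
      have h1 : (x ∘ Sum.inl) = 0 := by
        refine grs_mulVec_eq_zero (by omega) α u hα hu _ fun i => ?_
        have := congrFun hx1 i
        simpa [Matrix.mulVec, dotProduct, hA] using this
      have h2 : (x ∘ Sum.inr) = 0 := by
        refine grs_mulVec_eq_zero (by omega) α
          (fun i => (u i)⁻¹ * (∏ j ∈ Finset.univ.erase i, (α i - α j))⁻¹)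
          hα (fun i => mul_ne_zero (inv_ne_zero (hu i)) (inv_ne_zero (hprod i))) _ fun i => ?_
        have := congrFun hx2 i
        simpa [Matrix.mulVec, dotProduct, hB] using this
      funext j
      cases j with
      | inl j => exact congrFun h1 j
      | inr j => exact congrFun h2 j
    rw [Matrix.rank, LinearMap.finrank_range_of_inj hinj,
      Module.finrank_fintype_fun_eq_card]
    simp only [Fintype.card_sum, Fintype.card_fin]
    omega
end
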